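/- Let A be a C*-algebra, N a Hilbert A-module, f : N → A a bounded A-linear functional, φ a state on A, and n ∈ ℕ. Then there exists a positive g_n ∈ A with ‖g_n‖ ≤ 1 such that |φ(f(x)) − φ(g_n f(x))| ≤ ‖f(x)‖/n ≤ ‖f‖·‖x‖/n for all x ∈ N. -/

import Mathlib

open scoped ComplexOrder RightActions InnerProductSpace MultiplierAlgebra
open Filter

noncomputable section

variable {A : Type*} [NonUnitalCStarAlgebra A] [PartialOrder A] [StarOrderedRing A]

/-- A state on a C⋆-algebra: a positive continuous linear functional of norm one. -/
def IsState (φ : A →L[ℂ] ℂ) : Prop :=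
  (∀ a : A, 0 ≤ φ (star a * a)) ∧ ‖φ‖ = 1

/-- The Hilbert C⋆-module class as Mathlib defined it in December 2024 (right `A`-module,
`⟪x, y <• a⟫ = ⟪x, y⟫ * a`); Mathlib's `CStarModule` is now a left-module notion. -/
class RightCStarModule (A E : Type*) [NonUnitalSemiring A] [StarRing A]
    [Module ℂ A] [AddCommGroup E] [Module ℂ E] [PartialOrder A] [SMul Aᵐᵒᵖ E] [Norm A] [Norm E]
    extends Inner A E where
  inner_add_right {x} {y} {z} : inner x (y + z) = inner x y + inner x z
  inner_self_nonneg {x} : 0 ≤ inner x x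
  inner_self {x} : inner x x = 0 ↔ x = 0
  inner_op_smul_right {a : A} {x y : E} : inner x (y <• a) = inner x y * a
  inner_smul_right_complex {z : ℂ} {x} {y} : inner x (z • y) = z • inner x y
  star_inner x y : star (inner x y) = inner y x
  norm_eq_sqrt_norm_inner_self x : ‖x‖ = Real.sqrt ‖inner x x‖

variable {E : Type*} [NormedAddCommGroup E] [NormedSpace ℂ E] [SMul Aᵐᵒᵖ E] [RightCStarModule A E]

/-- `f : E → A` is `A`-linear; together with continuity and `ℂ`-linearity this says that `f`
is a bounded `A`-linear functional on the Hilbert C⋆-module `E`. -/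
def IsALinear (f : E →L[ℂ] A) : Prop := ∀ (x : E) (a : A), f (x <• a) = f x * a

/-- A `*`-`N⁰`-admissible system of `A`-linear functionals: each has norm at most one, and for
every `x ∈ N⁰` the series `Σᵢ (fᵢ x)* (fᵢ x)` is norm convergent with partial sums bounded by
`⟪x, x⟫`. -/
def StarAdmissible (N0 : Set E) (f : ℕ → E →L[ℂ] A) : Prop :=
  (∀ i, IsALinear (f i)) ∧ (∀ i, ‖f i‖ ≤ 1) ∧
    ∀ x ∈ N0, (∀ n : ℕ, ∑ i ∈ Finset.range n, star (f i x) * f i x ≤ ⟪x, x⟫_A) ∧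
      Summable fun i => star (f i x) * f i x

/-- An `N⁰`-admissible system of elements of `E`: each has norm at most one and for every
`x ∈ N⁰` the series `Σᵢ ⟪x, xᵢ⟫⟪xᵢ, x⟫` converges with partial sums bounded by `⟪x, x⟫`. -/
def Admissible (N0 : Set E) (X : ℕ → E) : Prop :=
  (∀ i, ‖X i‖ ≤ 1) ∧
    ∀ x ∈ N0, (∀ n : ℕ, ∑ i ∈ Finset.range n, ⟪x, X i⟫_A * ⟪X i, x⟫_A ≤ ⟪x, x⟫_A) ∧
      Summable fun i => ⟪x, X i⟫_A * ⟪X i, x⟫_A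

/-- The pseudometric `d_{F,Φ}` associated with a system of functionals `f` and a sequence of
states `Φ`: `d_{F,Φ}(x,y)² = sup_k Σ_{i ≥ k} |φ_k (f_i (x - y))|²`. -/
def dF (f : ℕ → E →L[ℂ] A) (Φ : ℕ → A →L[ℂ] ℂ) (x y : E) : ℝ :=
  Real.sqrt (⨆ k : ℕ, ∑' i : ℕ, ‖Φ k (f (k + i) (x - y))‖ ^ 2)

/-- The pseudometric `d_{X,Φ}` associated with a system of elements `X` and a sequence of
states `Φ`: `d_{X,Φ}(x,y)² = sup_k Σ_{i ≥ k} |φ_k ⟪x - y, x_i⟫|²`. -/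
def dX (X : ℕ → E) (Φ : ℕ → A →L[ℂ] ℂ) (x y : E) : ℝ :=
  Real.sqrt (⨆ k : ℕ, ∑' i : ℕ, ‖Φ k (⟪x - y, X (k + i)⟫_A)‖ ^ 2)

/-- `Y` is totally bounded w.r.t. the pseudometric `d`: for each `ε > 0` there is a finite
`ε`-net in `Y` consisting of elements of `Y`. -/
def TotBddWrt (Y : Set E) (d : E → E → ℝ) : Prop :=
  ∀ ε > (0 : ℝ), ∃ t : Finset E, ↑t ⊆ Y ∧ ∀ y ∈ Y, ∃ z ∈ t, d z y < ε

/-- An operator `g : A → E` is adjointable, with adjoint an `A`-functional `gs` on `E`: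
`⟪g a, x⟫ = ⟪a, gs x⟫_A = a* ⬝ gs x`. -/
def AdjFromA (g : A →L[ℂ] E) : Prop :=
  ∃ gs : E →L[ℂ] A, ∀ (a : A) (x : E), ⟪g a, x⟫_A = star a * gs x

/-- An `A`-functional `h : A → A` is adjointable: there is `hs : A → A` with
`⟪hs a, b⟫ = ⟪a, h b⟫`, i.e. `(hs a)* b = a* (h b)`. -/
def AdjFunctional (h : A →L[ℂ] A) : Prop :=
  ∃ hs : A →L[ℂ] A, ∀ a b : A, star (hs a) * b = star a * h b

/-- A functional `f : E → A` is locally adjointable if for every adjointable `A`-linear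
operator `g : A → E` the composition `f ∘ g : A → A` is an adjointable functional. -/
def LocAdj (f : E →L[ℂ] A) : Prop :=
  ∀ g : A →L[ℂ] E, (∀ a b : A, g (a * b) = g a <• b) → AdjFromA g →
    AdjFunctional (f.comp g)

/-- A functional `f : E → A` is represented by a (modular) multiplier of `E`: for every
`a ∈ A` the functional `x ↦ a* (f x)` is represented by an element of `E` (this encodes
`f ⬝ a ∈ E ⊆ M(E)`, using `E = M(E)A`). -/
def OuterRepr (f : E →L[ℂ] A) : Prop :=
  ∀ a : A, ∃ z : E, ∀ y : E, star a * f y = ⟪z, y⟫_A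

/-- The Hilbert C⋆-module `E` is countably generated: there is a sequence whose set of
`A`-linear combinations is dense. -/
def CountGen (A : Type*) (E : Type*) [NonUnitalCStarAlgebra A] [PartialOrder A]
    [StarOrderedRing A] [NormedAddCommGroup E] [NormedSpace ℂ E] [SMul Aᵐᵒᵖ E]
    [RightCStarModule A E] : Prop :=
  ∃ g : ℕ → E,
    closure (↑(Submodule.span ℂ (Set.range g ∪ {y | ∃ i, ∃ a : A, y = g i <• a})) : Set E)
      = Set.univ

/-- `F : M → E` is `A`-compact: it is a norm limit of finite sums of the elementary operators
`x ↦ y ⬝ ⟪z, x⟫`. -/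
def ACompact {M : Type*} [NormedAddCommGroup M] [NormedSpace ℂ M] [SMul Aᵐᵒᵖ M]
    [RightCStarModule A M] (F : M →L[ℂ] E) : Prop :=
  ∀ ε > (0 : ℝ), ∃ (n : ℕ) (y : Fin n → E) (z : Fin n → M),
    ∀ x : M, ‖F x - ∑ i, y i <• ⟪z i, x⟫_A‖ ≤ ε * ‖x‖


section AuxStatement13

open Complex in
private lemma aux13_expand {R : Type*} [NonUnitalRing R] [StarRing R] [Module ℂ R]
    [IsScalarTower ℂ R R] [SMulCommClass ℂ R R] [StarModule ℂ R]
    (ψ : R →ₗ[ℂ] ℂ) (a b : R) (z : ℂ) :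
    ψ (star (a + z • b) * (a + z • b)) =
      ψ (star a * a) + z * ψ (star a * b) + (starRingEnd ℂ z) * ψ (star b * a)
        + ((starRingEnd ℂ z) * z) * ψ (star b * b) := by
  simp only [star_add, star_smul, add_mul, mul_add, map_add, smul_mul_assoc, mul_smul_comm,
    smul_smul, map_smul, smul_eq_mul, Complex.star_def]
  ring

private lemma aux13_herm {R : Type*} [NonUnitalRing R] [StarRing R] [Module ℂ R]
    [IsScalarTower ℂ R R] [SMulCommClass ℂ R R] [StarModule ℂ R]
    (ψ : R →ₗ[ℂ] ℂ) (hψ : ∀ a : R, 0 ≤ ψ (star a * a)) (a b : R) :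
    ψ (star b * a) = starRingEnd ℂ (ψ (star a * b)) := by
  have him : ∀ c : R, (ψ (star c * c)).im = 0 := fun c => ((Complex.nonneg_iff.mp (hψ c)).2).symm
  have h1 := him (a + (1 : ℂ) • b)
  rw [aux13_expand ψ a b 1] at h1
  have h2 := him (a + Complex.I • b)
  rw [aux13_expand ψ a b Complex.I] at h2
  have ha := him a
  have hb := him b
  simp only [map_one, one_mul, Complex.conj_I, Complex.add_im, Complex.mul_im,
    Complex.I_re, Complex.I_im, Complex.neg_re, Complex.neg_im, neg_mul, one_mul,
    Complex.mul_re, mul_neg, neg_neg] at h1 h2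
  apply Complex.ext <;> simp only [Complex.conj_re, Complex.conj_im] <;> linarith

private lemma aux13_cs {R : Type*} [NonUnitalRing R] [StarRing R] [Module ℂ R]
    [IsScalarTower ℂ R R] [SMulCommClass ℂ R R] [StarModule ℂ R]
    (ψ : R →ₗ[ℂ] ℂ) (hψ : ∀ a : R, 0 ≤ ψ (star a * a)) (a b : R) :
    ‖ψ (star a * b)‖ ^ 2 ≤ (ψ (star a * a)).re * (ψ (star b * b)).re := by
  set α := (ψ (star a * a)).re with hα
  set β := (ψ (star b * b)).re with hβ
  set p := ψ (star a * b) with hp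
  have hre : ∀ c : R, 0 ≤ (ψ (star c * c)).re := fun c => (Complex.nonneg_iff.mp (hψ c)).1
  have him : ∀ c : R, (ψ (star c * c)).im = 0 := fun c => ((Complex.nonneg_iff.mp (hψ c)).2).symm
  have key : ∀ t : ℝ, 0 ≤ (α * ‖p‖ ^ 2) * (t * t) + (-(2 * ‖p‖ ^ 2)) * t + β := by
    intro t
    have h0 := hre (b + ((-t : ℂ) * p) • a)
    rw [aux13_expand ψ b a ((-t : ℂ) * p)] at h0
    have hq : ψ (star a * b) = p := rfl
    have hherm : ψ (star b * a) = starRingEnd ℂ p := aux13_herm ψ hψ a b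
    rw [hherm, hq] at h0
    have hnp : ‖p‖ ^ 2 = p.re ^ 2 + p.im ^ 2 := by
      rw [Complex.sq_norm, Complex.normSq_apply]; ring
    have ha' := him a
    have hb' := him b
    simp only [map_mul, map_neg, Complex.conj_ofReal, Complex.add_re, Complex.mul_re,
      Complex.mul_im, Complex.neg_re, Complex.neg_im, Complex.ofReal_re, Complex.ofReal_im,
      Complex.conj_re, Complex.conj_im] at h0
    rw [hnp]
    nlinarith [h0, ha', hb']
  have hd := discrim_le_zero key
  rw [discrim] at hd
  rcases eq_or_lt_of_le (sq_nonneg ‖p‖) with h0 | h0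
  · rw [← h0]; exact mul_nonneg (hre a) (hre b)
  · nlinarith [hd, h0]

variable {A : Type*} [NonUnitalCStarAlgebra A] [PartialOrder A] [StarOrderedRing A]

private lemma aux13_star (φ : A →L[ℂ] ℂ) (hpos : ∀ a : A, 0 ≤ φ (star a * a)) (a : A) :
    φ (star a) = starRingEnd ℂ (φ a) := by
  have hl := CStarAlgebra.increasingApproximateUnit A
  haveI : (CStarAlgebra.approximateUnit A).NeBot := hl.neBot
  have h1 : Tendsto (fun e : A => φ (star a * e)) (CStarAlgebra.approximateUnit A)
      (nhds (φ (star a))) :=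
    (φ.continuous.tendsto _).comp (hl.tendsto_mul_left (star a))
  have h2 : Tendsto (fun e : A => starRingEnd ℂ (φ (e * a))) (CStarAlgebra.approximateUnit A)
      (nhds (starRingEnd ℂ (φ a))) :=
    ((Complex.continuous_conj).tendsto _).comp ((φ.continuous.tendsto _).comp
      (hl.tendsto_mul_right a))
  refine tendsto_nhds_unique (h1.congr' ?_) h2
  filter_upwards [hl.eventually_star_eq] with e he
  have := aux13_herm φ.toLinearMap (by simpa using hpos) e a
  simp only [ContinuousLinearMap.coe_coe] at this
  rw [this, he]

private lemma aux13_key (φ : A →L[ℂ] ℂ) (hpos : ∀ a : A, 0 ≤ φ (star a * a))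
    (hφn : ‖φ‖ ≤ 1) (a : A) :
    ‖φ a‖ ^ 2 ≤ (φ (star a * a)).re := by
  have hl := CStarAlgebra.increasingApproximateUnit A
  haveI : (CStarAlgebra.approximateUnit A).NeBot := hl.neBot
  have h1 : Tendsto (fun e : A => ‖φ (e * a)‖ ^ 2) (CStarAlgebra.approximateUnit A)
      (nhds (‖φ a‖ ^ 2)) := by
    have : Tendsto (fun e : A => φ (e * a)) (CStarAlgebra.approximateUnit A) (nhds (φ a)) :=
      (φ.continuous.tendsto _).comp (hl.tendsto_mul_right a)
    exact (continuous_norm.tendsto _).comp this |>.pow 2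
  refine le_of_tendsto h1 ?_
  filter_upwards [hl.eventually_norm] with e he
  have hcs := aux13_cs φ.toLinearMap (by simpa using hpos) (star e) a
  simp only [ContinuousLinearMap.coe_coe, star_star] at hcs
  have hre : (φ (e * star e)).re ≤ 1 := by
    calc (φ (e * star e)).re ≤ ‖φ (e * star e)‖ := Complex.re_le_norm _
      _ ≤ ‖φ‖ * ‖e * star e‖ := φ.le_opNorm _
      _ ≤ 1 * (‖e‖ * ‖star e‖) := by
          gcongr
          exact norm_mul_le _ _
      _ ≤ 1 := by rw [one_mul, norm_star]; nlinarith [norm_nonneg e]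
  have hre2 : 0 ≤ (φ (star a * a)).re := (Complex.nonneg_iff.mp (hpos a)).1
  calc ‖φ (e * a)‖ ^ 2 ≤ (φ (e * star e)).re * (φ (star a * a)).re := hcs
    _ ≤ 1 * (φ (star a * a)).re := by gcongr
    _ = _ := one_mul _

end AuxStatement13

set_option maxHeartbeats 1000000 in
/-- For a bounded `A`-linear functional `f : N → A`, a state `φ` and `n ≥ 1` there is a positive
`g ∈ A`, `‖g‖ ≤ 1`, with `|φ(f x) − φ(g (f x))| ≤ ‖f x‖/n ≤ ‖f‖ ‖x‖ / n` for all `x`. -/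
theorem statement13 (f : E →L[ℂ] A) (hf : IsALinear f) (φ : A →L[ℂ] ℂ) (hφ : IsState φ)
    (n : ℕ) (hn : 0 < n) :
    ∃ g : A, 0 ≤ g ∧ ‖g‖ ≤ 1 ∧ ∀ x : E,
      ‖φ (f x) - φ (g * f x)‖ ≤ ‖f x‖ / n ∧ ‖f x‖ / n ≤ ‖f‖ * ‖x‖ / n := by
  obtain ⟨hpos, hnorm⟩ := hφ
  have hφn : ‖φ‖ ≤ 1 := hnorm.le
  -- the extension of φ to the unitization
  let ψ : Unitization ℂ A →ₗ[ℂ] ℂ :=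
    (Unitization.fstHom ℂ A).toLinearMap + φ.toLinearMap ∘ₗ (Unitization.sndHom ℂ ℂ A)
  have hψval : ∀ x : Unitization ℂ A, ψ x = x.fst + φ x.snd := fun x => rfl
  have hψ1 : ψ 1 = 1 := by simp [hψval]
  have hψinr : ∀ b : A, ψ b = φ b := by intro b; simp [hψval]
  -- positivity of ψ
  have hψ : ∀ x : Unitization ℂ A, 0 ≤ ψ (star x * x) := by
    intro x
    rw [hψval, Unitization.fst_mul, Unitization.snd_mul, Unitization.fst_star,
      Unitization.snd_star]
    set z := x.fst with hz
    set a := x.snd with ha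
    rw [map_add, map_add, map_smul, map_smul]
    rw [aux13_star φ hpos a]
    have hkey := aux13_key φ hpos hφn a
    have him : (φ (star a * a)).im = 0 := ((Complex.nonneg_iff.mp (hpos a)).2).symm
    have hrepos : 0 ≤ (φ (star a * a)).re := (Complex.nonneg_iff.mp (hpos a)).1
    rw [Complex.nonneg_iff]
    constructor
    · simp only [Complex.star_def, Complex.add_re, Complex.mul_re, Complex.conj_re,
        Complex.conj_im, smul_eq_mul, Complex.ofReal_re]
      have h1 : ‖φ a‖ ^ 2 = (φ a).re ^ 2 + (φ a).im ^ 2 := by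
        rw [Complex.sq_norm, Complex.normSq_apply]; ring
      have h2 : ‖φ a‖ ^ 2 ≤ (φ (star a * a)).re := hkey
      nlinarith [sq_nonneg (z.re - (φ a).re), sq_nonneg (z.im + (φ a).im),
        sq_nonneg (z.re + (φ a).re), sq_nonneg (z.im - (φ a).im)]
    · simp only [Complex.star_def, Complex.add_im, Complex.mul_im, Complex.conj_re,
        Complex.conj_im, smul_eq_mul]
      rw [him]
      ring
  -- choose the positive element g
  have hδ : (0 : ℝ) < 1 / n := by positivity
  have hδ1 : (1 : ℝ) / n ≤ 1 := by
    rw [div_le_one (by exact_mod_cast hn)]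
    exact_mod_cast hn
  set δ : ℝ := 1 / n with hδdef
  have hsq : Real.sqrt (1 - δ ^ 2 / 2) < ‖φ‖ := by
    rw [hnorm]
    nlinarith [Real.sq_sqrt (show (0:ℝ) ≤ 1 - δ ^ 2 / 2 by nlinarith),
      Real.sqrt_nonneg (1 - δ ^ 2 / 2)]
  obtain ⟨a, ha1, ha2⟩ := φ.exists_lt_apply_of_lt_opNorm hsq
  have hg2 : 1 - δ ^ 2 / 2 < (φ (star a * a)).re := by
    have h1 : ‖φ a‖ ^ 2 ≤ (φ (star a * a)).re := aux13_key φ hpos hφn a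
    have h2 : Real.sqrt (1 - δ ^ 2 / 2) < ‖φ a‖ := ha2
    nlinarith [Real.sq_sqrt (show (0:ℝ) ≤ 1 - δ ^ 2 / 2 by nlinarith),
      Real.sqrt_nonneg (1 - δ ^ 2 / 2), norm_nonneg (φ a)]
  set g : A := star a * a with hgdef
  have hgpos : (0 : A) ≤ g := star_mul_self_nonneg a
  have hgnorm : ‖g‖ ≤ 1 := by
    calc ‖star a * a‖ ≤ ‖star a‖ * ‖a‖ := norm_mul_le _ _
      _ ≤ 1 := by rw [norm_star]; nlinarith [norm_nonneg a]
  refine ⟨g, hgpos, hgnorm, ?_⟩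
  -- the element u = 1 - g in the unitization
  set u : Unitization ℂ A := 1 - (g : Unitization ℂ A) with hudef
  have hgsa : star g = g := by rw [hgdef, star_mul, star_star]
  have hustar : star u = u := by
    rw [hudef, star_sub, star_one, ← Unitization.inr_star, hgsa]
  have huu : (ψ (star u * u)).re ≤ δ ^ 2 := by
    have hexp : star u * u = 1 - (g : Unitization ℂ A) - (g : Unitization ℂ A)
        + (g : Unitization ℂ A) * (g : Unitization ℂ A) := by
      rw [hustar, hudef]
      noncomm_ring
    rw [hexp, map_add, map_sub, map_sub, hψ1, ← Unitization.inr_mul, hψinr, hψinr]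
    have hgg : (φ (g * g)).re ≤ 1 := by
      calc (φ (g * g)).re ≤ ‖φ (g * g)‖ := Complex.re_le_norm _
        _ ≤ ‖φ‖ * ‖g * g‖ := φ.le_opNorm _
        _ ≤ 1 * (‖g‖ * ‖g‖) := by gcongr; exact norm_mul_le _ _
        _ ≤ 1 := by nlinarith [norm_nonneg g]
    simp only [Complex.add_re, Complex.sub_re, Complex.one_re]
    nlinarith [hg2]
  intro x
  set b : A := f x with hbdef
  refine ⟨?_, by gcongr; exact f.le_opNorm x⟩
  -- Cauchy-Schwarz in the unitization
  have hcs := aux13_cs ψ hψ u (b : Unitization ℂ A)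
  rw [hustar] at hcs
  have hval : ψ (u * (b : Unitization ℂ A)) = φ b - φ (g * b) := by
    have : u * (b : Unitization ℂ A) = (b : Unitization ℂ A)
        - (g : Unitization ℂ A) * (b : Unitization ℂ A) := by
      rw [hudef]
      noncomm_ring
    rw [this, map_sub, hψinr, ← Unitization.inr_mul, hψinr]
  have hbb : (ψ (star (b : Unitization ℂ A) * (b : Unitization ℂ A))).re ≤ ‖b‖ ^ 2 := by
    rw [← Unitization.inr_star, ← Unitization.inr_mul, hψinr]
    calc (φ (star b * b)).re ≤ ‖φ (star b * b)‖ := Complex.re_le_norm _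
      _ ≤ ‖φ‖ * ‖star b * b‖ := φ.le_opNorm _
      _ ≤ 1 * (‖star b‖ * ‖b‖) := by gcongr; exact norm_mul_le _ _
      _ = ‖b‖ ^ 2 := by rw [one_mul, norm_star]; ring
  rw [hval] at hcs
  rw [hustar] at huu
  have hfin : ‖φ b - φ (g * b)‖ ^ 2 ≤ (δ * ‖b‖) ^ 2 := by
    calc ‖φ b - φ (g * b)‖ ^ 2 ≤ (ψ (u * u)).re *
          (ψ (star (b : Unitization ℂ A) * (b : Unitization ℂ A))).re := hcs
      _ ≤ δ ^ 2 * ‖b‖ ^ 2 := by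
          apply mul_le_mul huu hbb ?_ (by positivity)
          · exact (Complex.nonneg_iff.mp (hψ _)).1
      _ = (δ * ‖b‖) ^ 2 := by ring
  have : ‖φ b - φ (g * b)‖ ≤ δ * ‖b‖ :=
    (pow_le_pow_iff_left₀ (norm_nonneg _) (mul_nonneg hδ.le (norm_nonneg b)) two_ne_zero).mp hfin
  calc ‖φ b - φ (g * b)‖ ≤ δ * ‖b‖ := this
    _ = ‖b‖ / n := by rw [hδdef]; ring
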